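/- (PU sets form a complete complementary code.) Let M ≥ 1, K ≥ 0, let U⁽⁰⁾, …, U⁽ᴷ⁾ be M×M complex matrices with (U⁽ˡ⁾)ᴴ·U⁽ˡ⁾ = γ_l·I for real γ_l > 0, and let D_m⁽ᵏ⁾ be arbitrary nonnegative integers. Define P(X) = U⁽⁰⁾ · ∏_{k=0}^{K−1} ( D⁽ᵏ⁾(X) · U⁽ᵏ⁺¹⁾ ) over ℂ[X], where D⁽ᵏ⁾(X) = diag(X^{D_0⁽ᵏ⁾}, …, X^{D_{M−1}⁽ᵏ⁾}), and let P_n denote the coefficient matrix of X^n. For p ∈ {0,…,M−1}, let the p-th set consist of the M sequences x_r^{(p)}(n) = (P_n)_{r,p}, r = 0,…,M−1. Then: (i) each set is a complementary set, i.e. for every nonzero integer k, ∑_{r=0}^{M−1} ∑_{n∈ℤ} x_r^{(p)}(n)·conj(x_r^{(p)}(n+k)) = 0; and (ii) distinct sets are mutually orthogonal, i.e. for p ≠ q and every integer k, ∑_{r=0}^{M−1} ∑_{n∈ℤ} conj(x_r^{(p)}(n))·x_r^{(q)}(n+k) = 0. Hence the M columns of P form a complete complementary code. -/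

import Mathlib

set_option maxHeartbeats 1000000

open Matrix Polynomial LaurentPolynomial


noncomputable def tauCCC : Polynomial ℂ →+* LaurentPolynomial ℂ :=
  Polynomial.eval₂RingHom (LaurentPolynomial.C.comp (starRingEnd ℂ)) (T (-1))

lemma tauCCC_C (a : ℂ) : tauCCC (Polynomial.C a) = LaurentPolynomial.C (starRingEnd ℂ a) := by
  simp [tauCCC]

lemma tauCCC_X_pow (d : ℕ) : tauCCC ((X : Polynomial ℂ) ^ d) = T (-(d : ℤ)) := by
  simp [tauCCC, T_pow]

/-- Coefficient extension of a polynomial to ℤ. -/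
noncomputable def xz (p : Polynomial ℂ) (n : ℤ) : ℂ :=
  if 0 ≤ n then p.coeff n.toNat else 0

lemma xz_add (p q : Polynomial ℂ) (n : ℤ) : xz (p + q) n = xz p n + xz q n := by
  unfold xz; split_ifs <;> simp

lemma tauCCC_apply (p : Polynomial ℂ) (k : ℤ) :
    (tauCCC p).coeff k = starRingEnd ℂ (xz p (-k)) := by
  induction p using Polynomial.induction_on' with
  | add p q hp hq =>
      rw [map_add, AddMonoidAlgebra.coeff_add, Finsupp.add_apply, hp, hq, xz_add, map_add]
  | monomial n a =>
      rw [← Polynomial.C_mul_X_pow_eq_monomial, _root_.map_mul, tauCCC_C, tauCCC_X_pow]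
      rw [← single_eq_C_mul_T]
      rw [AddMonoidAlgebra.coeff_single, Finsupp.single_apply]
      simp only [xz, ← Polynomial.C_mul_X_pow_eq_monomial, Polynomial.coeff_C_mul,
        Polynomial.coeff_X_pow]
      by_cases h : -(n : ℤ) = k
      · have h0 : (0 : ℤ) ≤ -k := by omega
        have h1 : (-k).toNat = n := by omega
        simp [h, h0, h1, show k ≤ 0 by omega]
      · rcases le_or_gt 0 (-k) with h0 | h0
        · have h1 : ¬ ((-k).toNat = n) := by omega
          simp [h, h0, h1]
        · simp [h, not_le.2 h0, show ¬ k ≤ 0 by omega]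

lemma toLaurent_apply' (p : Polynomial ℂ) (k : ℤ) :
    (Polynomial.toLaurent p).coeff k = xz p k := by
  induction p using Polynomial.induction_on' with
  | add p q hp hq =>
      rw [map_add, AddMonoidAlgebra.coeff_add, Finsupp.add_apply, hp, hq, xz_add]
  | monomial n a =>
      rw [Polynomial.toLaurent_C_mul_T, ← single_eq_C_mul_T, AddMonoidAlgebra.coeff_single, Finsupp.single_apply]
      simp only [xz, Polynomial.coeff_monomial]
      by_cases h : (n : ℤ) = k
      · have h0 : (0:ℤ) ≤ k := by omega
        have h1 : n = k.toNat := by omega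
        simp [h, h0, h1]
      · rcases le_or_gt 0 k with h0 | h0
        · have h1 : ¬ (n = k.toNat) := by omega
          simp [h, h0, h1]
        · simp [h, not_le.2 h0]

lemma laurent_mul_apply (f g : LaurentPolynomial ℂ) (k : ℤ) :
    (f * g).coeff k = ∑ᶠ a : ℤ, f.coeff a * g.coeff (k - a) := by
  rw [AddMonoidAlgebra.coeff_mul]
  have h1 : ∀ a : ℤ, (Finsupp.sum g.coeff fun a₂ b₂ => if a + a₂ = k then f.coeff a * b₂ else 0)
      = f.coeff a * g.coeff (k - a) := by
    intro a
    rw [Finsupp.sum]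
    have : ∀ a₂ : ℤ, (a + a₂ = k) = (a₂ = k - a) := by intro a₂; simp; omega
    simp_rw [this]
    rw [Finset.sum_ite_eq' g.coeff.support (k - a) (fun a₂ => f.coeff a * g.coeff a₂)]
    split_ifs with h
    · rfl
    · rw [Finsupp.notMem_support_iff.mp h, mul_zero]
  calc (Finsupp.sum f.coeff fun a₁ b₁ => Finsupp.sum g.coeff fun a₂ b₂ => if a₁ + a₂ = k then b₁ * b₂ else 0)
      = ∑ a ∈ f.coeff.support, f.coeff a * g.coeff (k - a) := Finset.sum_congr rfl (fun a _ => h1 a)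
    _ = ∑ᶠ a : ℤ, f.coeff a * g.coeff (k - a) := by
        refine (finsum_eq_finset_sum_of_support_subset _ ?_).symm
        intro a ha
        simp only [Function.mem_support] at ha
        simp only [Finset.mem_coe, Finsupp.mem_support_iff]
        intro h0
        exact ha (by rw [h0, zero_mul])

lemma coeff_tau_mul (p q : Polynomial ℂ) (k : ℤ) :
    (tauCCC p * Polynomial.toLaurent q).coeff k
      = ∑ᶠ n : ℤ, starRingEnd ℂ (xz p n) * xz q (n + k) := by
  rw [laurent_mul_apply]
  have : (fun a : ℤ => (tauCCC p).coeff a * (Polynomial.toLaurent q).coeff (k - a))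
      = fun a : ℤ => starRingEnd ℂ (xz p (-a)) * xz q (-a + k) := by
    funext a
    rw [tauCCC_apply, toLaurent_apply']
    ring_nf
  rw [this]
  exact finsum_comp_equiv (Equiv.neg ℤ) (f := fun n => starRingEnd ℂ (xz p n) * xz q (n + k))

/-- The paraunitary property transported to Laurent polynomial matrices. -/
def goodCCC {M : ℕ} (A : Matrix (Fin M) (Fin M) (Polynomial ℂ))
    (c : LaurentPolynomial ℂ) : Prop :=
  (A.map tauCCC)ᵀ * A.map Polynomial.toLaurent = c • (1 : Matrix (Fin M) (Fin M) (LaurentPolynomial ℂ))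

lemma goodCCC_mul {M : ℕ} {A B : Matrix (Fin M) (Fin M) (Polynomial ℂ)}
    {a b : LaurentPolynomial ℂ} (hA : goodCCC A a) (hB : goodCCC B b) :
    goodCCC (A * B) (a * b) := by
  unfold goodCCC at *
  rw [Matrix.map_mul, Matrix.map_mul, Matrix.transpose_mul]
  calc (B.map tauCCC)ᵀ * (A.map tauCCC)ᵀ * (A.map Polynomial.toLaurent * B.map Polynomial.toLaurent)
      = (B.map tauCCC)ᵀ * ((A.map tauCCC)ᵀ * A.map Polynomial.toLaurent) * B.map Polynomial.toLaurent := by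
        rw [mul_assoc, mul_assoc, mul_assoc]
    _ = a • ((B.map tauCCC)ᵀ * B.map Polynomial.toLaurent) := by
        rw [hA, Matrix.mul_smul, Matrix.mul_one, Matrix.smul_mul]
    _ = (a * b) • 1 := by rw [hB, smul_smul]

lemma goodCCC_unit {M : ℕ} {W : Matrix (Fin M) (Fin M) ℂ} {c : ℂ}
    (hW : Wᴴ * W = c • (1 : Matrix (Fin M) (Fin M) ℂ)) :
    goodCCC (W.map Polynomial.C) (LaurentPolynomial.C c) := by
  unfold goodCCC
  have h1 : ((W.map Polynomial.C).map tauCCC)ᵀ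
      = (LaurentPolynomial.C : ℂ →+* LaurentPolynomial ℂ).mapMatrix Wᴴ := by
    ext i j
    simp [Matrix.map_map, Matrix.conjTranspose_apply, tauCCC_C, Function.comp]
  have h2 : (W.map Polynomial.C).map Polynomial.toLaurent
      = (LaurentPolynomial.C : ℂ →+* LaurentPolynomial ℂ).mapMatrix W := by
    ext i j
    simp [Matrix.map_map, Polynomial.toLaurent_C, Function.comp]
  rw [h1, h2, ← _root_.map_mul, hW]
  rw [Matrix.smul_one_eq_diagonal, RingHom.mapMatrix_apply,
    Matrix.diagonal_map (map_zero _), Matrix.smul_one_eq_diagonal]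

lemma goodCCC_diag {M : ℕ} (d : Fin M → ℕ) :
    goodCCC (Matrix.diagonal fun m => (X : Polynomial ℂ) ^ (d m)) 1 := by
  unfold goodCCC
  rw [Matrix.diagonal_map (map_zero _), Matrix.diagonal_map (map_zero _),
    Matrix.diagonal_transpose, Matrix.diagonal_mul_diagonal, one_smul]
  have : (fun m => tauCCC ((X : Polynomial ℂ) ^ d m) * Polynomial.toLaurent ((X : Polynomial ℂ) ^ d m))
      = fun _ => (1 : LaurentPolynomial ℂ) := by
    funext m
    rw [tauCCC_X_pow, Polynomial.toLaurent_X_pow, ← T_add, neg_add_cancel, T_zero]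
  rw [this]
  exact Matrix.diagonal_one

lemma goodCCC_prod (M : ℕ) (U : ℕ → Matrix (Fin M) (Fin M) ℂ) (γ : ℕ → ℝ)
    (D : ℕ → Fin M → ℕ) :
    ∀ K : ℕ, (∀ l, l ≤ K → (U l)ᴴ * U l = ((γ l : ℂ)) • (1 : Matrix (Fin M) (Fin M) ℂ)) →
    goodCCC ((U 0).map Polynomial.C *
      ((List.range K).map (fun k =>
        Matrix.diagonal (fun m : Fin M => (X : Polynomial ℂ) ^ (D k m)) *
          (U (k + 1)).map Polynomial.C)).prod)
      (LaurentPolynomial.C (∏ l ∈ Finset.range (K + 1), ((γ l : ℂ)))) := by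
  intro K
  induction K with
  | zero =>
      intro hU
      rw [List.range_zero, List.map_nil, List.prod_nil, mul_one, Finset.prod_range_one]
      exact goodCCC_unit (hU 0 le_rfl)
  | succ K ih =>
      intro hU
      have hU' : ∀ l, l ≤ K → (U l)ᴴ * U l = ((γ l : ℂ)) • (1 : Matrix (Fin M) (Fin M) ℂ) :=
        fun l hl => hU l (hl.trans (Nat.le_succ K))
      rw [List.range_succ, List.map_append, List.prod_append, List.map_singleton,
        List.prod_singleton, ← mul_assoc]
      have h := goodCCC_mul (ih hU') (goodCCC_mul (goodCCC_diag (D K))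
        (goodCCC_unit (hU (K + 1) le_rfl)))
      have hc : LaurentPolynomial.C (∏ l ∈ Finset.range (K + 1), ((γ l : ℂ))) *
          (1 * LaurentPolynomial.C ((γ (K + 1) : ℂ)))
          = LaurentPolynomial.C (∏ l ∈ Finset.range (K + 1 + 1), ((γ l : ℂ))) := by
        rw [one_mul, ← _root_.map_mul, ← Finset.prod_range_succ]
      rw [hc] at h
      with_reducible exact h

lemma conj_finsum_CCC (f : ℤ → ℂ) :
    (starRingEnd ℂ) (∑ᶠ n, f n) = ∑ᶠ n, (starRingEnd ℂ) (f n) := by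
  by_cases h : (Function.support f).Finite
  · exact (starRingEnd ℂ).toAddMonoidHom.map_finsum h
  · have h2 : ¬ (Function.support fun n => (starRingEnd ℂ) (f n)).Finite := by
      have he : (Function.support fun n => (starRingEnd ℂ) (f n)) = Function.support f := by
        ext n
        simp [Function.mem_support, _root_.map_eq_zero]
      rw [he]; exact h
    rw [finsum_of_infinite_support h, finsum_of_infinite_support h2, map_zero]

/-- The columns of the paraunitary generating matrix
`P(X) = U⁽⁰⁾ ∏_k (D⁽ᵏ⁾(X) U⁽ᵏ⁺¹⁾)` form a complete complementary code: each
column is a complementary set of `M` sequences, and distinct columns are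
mutually orthogonal (all cross-correlation sums vanish at every lag). -/
theorem paraunitary_sets_form_CCC
    (M K : ℕ) (hM : 1 ≤ M)
    (U : ℕ → Matrix (Fin M) (Fin M) ℂ) (γ : ℕ → ℝ)
    (hγ : ∀ l, l ≤ K → 0 < γ l)
    (hU : ∀ l, l ≤ K →
      (U l).conjTranspose * U l = ((γ l : ℂ)) • (1 : Matrix (Fin M) (Fin M) ℂ))
    (D : ℕ → Fin M → ℕ)
    (P : Matrix (Fin M) (Fin M) (Polynomial ℂ))
    (hP : P = (U 0).map Polynomial.C *
      ((List.range K).map (fun k =>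
        Matrix.diagonal (fun m : Fin M => (Polynomial.X : Polynomial ℂ) ^ (D k m)) *
          (U (k + 1)).map Polynomial.C)).prod)
    (x : Fin M → Fin M → ℤ → ℂ)
    (hx : ∀ p r : Fin M, ∀ n : ℤ,
      x p r n = if 0 ≤ n then (P r p).coeff n.toNat else 0) :
    (∀ p : Fin M, ∀ k : ℤ, k ≠ 0 →
      ∑ r : Fin M, ∑ᶠ n : ℤ, x p r n * (starRingEnd ℂ) (x p r (n + k)) = 0) ∧
    (∀ p q : Fin M, p ≠ q → ∀ k : ℤ,
      ∑ r : Fin M, ∑ᶠ n : ℤ, (starRingEnd ℂ) (x p r n) * x q r (n + k) = 0) := by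
  have hx' : ∀ p r : Fin M, ∀ n : ℤ, x p r n = xz (P r p) n := by
    intro p r n; rw [hx]; rfl
  have hgood := goodCCC_prod M U γ D K hU
  rw [← hP] at hgood
  unfold goodCCC at hgood
  have hentry : ∀ p q : Fin M, ∀ k : ℤ,
      (∑ r : Fin M, ∑ᶠ n : ℤ, (starRingEnd ℂ) (x p r n) * x q r (n + k))
        = (((LaurentPolynomial.C (∏ l ∈ Finset.range (K + 1), ((γ l : ℂ)))) •
            (1 : Matrix (Fin M) (Fin M) (LaurentPolynomial ℂ))) p q).coeff k := by
    intro p q k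
    rw [← hgood, Matrix.mul_apply, AddMonoidAlgebra.coeff_sum, Finsupp.finset_sum_apply]
    refine Finset.sum_congr rfl fun r _ => ?_
    rw [Matrix.transpose_apply, Matrix.map_apply, Matrix.map_apply, coeff_tau_mul]
    refine finsum_congr fun n => ?_
    rw [hx' p r n, hx' q r (n + k)]
  constructor
  · intro p k hk
    have h1 : ∀ r : Fin M, (∑ᶠ n : ℤ, x p r n * (starRingEnd ℂ) (x p r (n + k)))
        = (starRingEnd ℂ) (∑ᶠ n : ℤ, (starRingEnd ℂ) (x p r n) * x p r (n + k)) := by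
      intro r
      rw [conj_finsum_CCC]
      refine finsum_congr fun n => ?_
      rw [_root_.map_mul, Complex.conj_conj]
    calc (∑ r : Fin M, ∑ᶠ n : ℤ, x p r n * (starRingEnd ℂ) (x p r (n + k)))
        = (starRingEnd ℂ) (∑ r : Fin M, ∑ᶠ n : ℤ, (starRingEnd ℂ) (x p r n) * x p r (n + k)) := by
          rw [map_sum]; exact Finset.sum_congr rfl fun r _ => h1 r
      _ = 0 := by
          rw [hentry p p k, Matrix.smul_apply, Matrix.one_apply_eq, smul_eq_mul, mul_one,
            LaurentPolynomial.C_apply, if_neg hk, map_zero]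
  · intro p q hpq k
    rw [hentry p q k, Matrix.smul_apply, Matrix.one_apply_ne hpq, smul_zero]
    simp
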